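/- Let g(x) = max_{j∈J} g_j(x) with J finite and all g_j affine on ℝⁿ. Then equality holds: ⋃_{p∈S, g'(x̄;p)>0} Argmax_{v∈∂g(x̄)} ⟨v,p⟩ = Limsup_{x→x̄, g(x)>g(x̄)} ∂g(x). -/

import Mathlib

open Filter Topology Set Metric
open scoped RealInnerProductSpace

noncomputable section

/-- `n`-dimensional Euclidean space. -/
abbrev En (n : ℕ) := EuclideanSpace ℝ (Fin n)

/-- `d` is the Hadamard directional derivative map of `f` at `x`:
for each direction `p`, `(f (x + t • p') - f x)/t → d p` as `t ↓ 0`, `p' → p`. -/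
def HadamardDD {n : ℕ} (f : En n → ℝ) (x : En n) (d : En n → ℝ) : Prop :=
  ∀ p : En n,
    Tendsto (fun q : ℝ × En n => (f (x + q.1 • q.2) - f x) / q.1)
      ((𝓝[>] (0 : ℝ)) ×ˢ 𝓝 p) (𝓝 (d p))

/-- The Fréchet subdifferential of `f` at `x`. -/
def FSubdiff {n : ℕ} (f : En n → ℝ) (x : En n) : Set (En n) :=
  {v | ∀ ε > (0 : ℝ), ∀ᶠ y in 𝓝 x, f y - f x - ⟪v, y - x⟫ ≥ -ε * ‖y - x‖}

/-- The outer (Painlevé–Kuratowski) limit of Fréchet subdifferentials of `f`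
along sequences `x_k → xb` with `f x_k > f xb`. -/
def OuterLim {n : ℕ} (f : En n → ℝ) (xb : En n) : Set (En n) :=
  {y | ∃ xk yk : ℕ → En n, Tendsto xk atTop (𝓝 xb) ∧ (∀ k, f xb < f (xk k)) ∧
    (∀ k, yk k ∈ FSubdiff f (xk k)) ∧ Tendsto yk atTop (𝓝 y)}

section Aux

variable {n : ℕ} {ι : Type*} [Fintype ι] {a : ι → En n} {b : ι → ℝ} {g : En n → ℝ}

private lemma aux_val_le (hg : ∀ x : En n, IsGreatest (Set.range fun j => ⟪a j, x⟫ + b j) (g x))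
    (j : ι) (x : En n) : ⟪a j, x⟫ + b j ≤ g x := (hg x).2 ⟨j, rfl⟩

private lemma aux_val_ex (hg : ∀ x : En n, IsGreatest (Set.range fun j => ⟪a j, x⟫ + b j) (g x))
    (x : En n) : ∃ j, ⟪a j, x⟫ + b j = g x := (hg x).1

private lemma aux_cont (hg : ∀ x : En n, IsGreatest (Set.range fun j => ⟪a j, x⟫ + b j) (g x)) :
    Continuous g := by
  obtain ⟨C, hC⟩ := Finite.exists_le fun j => ‖a j‖
  have key : ∀ x y : En n, g x - g y ≤ (max C 0) * ‖x - y‖ := by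
    intro x y
    obtain ⟨j, hj⟩ := aux_val_ex hg x
    have h1 := aux_val_le hg j y
    have h2 : ⟪a j, x⟫ - ⟪a j, y⟫ ≤ max C 0 * ‖x - y‖ := by
      rw [← inner_sub_right]
      calc ⟪a j, x - y⟫ ≤ ‖a j‖ * ‖x - y‖ := real_inner_le_norm _ _
        _ ≤ max C 0 * ‖x - y‖ :=
          mul_le_mul_of_nonneg_right ((hC j).trans (le_max_left _ _)) (norm_nonneg _)
    linarith
  have hlip : LipschitzWith (Real.toNNReal C) g := by
    apply LipschitzWith.of_dist_le_mul
    intro x y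
    rw [Real.dist_eq, dist_eq_norm, Real.coe_toNNReal']
    rw [abs_sub_le_iff]
    constructor
    · exact key x y
    · have := key y x
      rwa [norm_sub_rev] at this
  exact hlip.continuous

private lemma aux_mem_iff (hg : ∀ x : En n, IsGreatest (Set.range fun j => ⟪a j, x⟫ + b j) (g x))
    {x v : En n} : v ∈ FSubdiff g x ↔ ∀ z, g x + ⟪v, z - x⟫ ≤ g z := by
  constructor
  · intro hv z
    rcases eq_or_ne z x with rfl | hzx
    · simp
    have hzn : (0:ℝ) < ‖z - x‖ := by
      rw [norm_pos_iff]; exact sub_ne_zero.2 hzx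
    have key : ∀ ε > (0:ℝ), ⟪v, z - x⟫ ≤ g z - g x + ε * ‖z - x‖ := by
      intro ε hε
      have hev := hv ε hε
      rw [Metric.eventually_nhds_iff] at hev
      obtain ⟨δ, hδ, hball⟩ := hev
      set t : ℝ := min (δ / (2 * ‖z - x‖)) 1 with ht_def
      have ht0 : 0 < t := lt_min (by positivity) one_pos
      have ht1 : t ≤ 1 := min_le_right _ _
      set y := x + t • (z - x) with hy
      have hy_sub : y - x = t • (z - x) := by rw [hy]; abel
      have hdist : dist y x < δ := by
        rw [dist_eq_norm, hy_sub, norm_smul, Real.norm_eq_abs, abs_of_pos ht0]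
        calc t * ‖z - x‖ ≤ (δ / (2 * ‖z - x‖)) * ‖z - x‖ :=
              mul_le_mul_of_nonneg_right (min_le_left _ _) hzn.le
          _ = δ / 2 := by field_simp
          _ < δ := by linarith
      have h1 := hball hdist
      have hinner : ⟪v, y - x⟫ = t * ⟪v, z - x⟫ := by
        rw [hy_sub, real_inner_smul_right]
      have hnorm : ‖y - x‖ = t * ‖z - x‖ := by
        rw [hy_sub, norm_smul, Real.norm_eq_abs, abs_of_pos ht0]
      obtain ⟨j, hj⟩ := aux_val_ex hg y
      have hjx := aux_val_le hg j x
      have hjz := aux_val_le hg j z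
      have hyval : ⟪a j, y⟫ + b j = (1 - t) * (⟪a j, x⟫ + b j) + t * (⟪a j, z⟫ + b j) := by
        rw [hy, inner_add_right, real_inner_smul_right, inner_sub_right]
        ring
      have hconv : g y ≤ (1 - t) * g x + t * g z := by
        rw [← hj, hyval]
        have h1t : 0 ≤ 1 - t := by linarith
        nlinarith [mul_le_mul_of_nonneg_left hjx h1t, mul_le_mul_of_nonneg_left hjz ht0.le]
      rw [hinner, hnorm] at h1
      have hfin : t * ⟪v, z - x⟫ ≤ t * (g z - g x + ε * ‖z - x‖) := by nlinarith
      exact le_of_mul_le_mul_left hfin ht0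
    by_contra hcon
    push_neg at hcon
    have h0 : 0 < (g x + ⟪v, z - x⟫ - g z) / (2 * ‖z - x‖) := by
      apply div_pos (by linarith) (by positivity)
    have := key _ h0
    rw [div_mul_eq_mul_div] at this
    have h2 : (g x + ⟪v, z - x⟫ - g z) * ‖z - x‖ / (2 * ‖z - x‖)
        = (g x + ⟪v, z - x⟫ - g z) / 2 := by
      rw [mul_comm (2:ℝ) ‖z - x‖, ← div_div, mul_div_assoc]
      field_simp
    rw [h2] at this
    linarith
  · intro hv ε hε
    filter_upwards with y
    have h1 := hv y
    have h2 : 0 ≤ ε * ‖y - x‖ := by positivity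
    have : -ε * ‖y - x‖ ≤ 0 := by linarith
    linarith

private lemma aux_active (hg : ∀ x : En n, IsGreatest (Set.range fun j => ⟪a j, x⟫ + b j) (g x))
    (x : En n) :
    ∀ᶠ y in 𝓝 x, ∀ j, ⟪a j, y⟫ + b j = g y → ⟪a j, x⟫ + b j = g x := by
  rw [eventually_all]
  intro j
  by_cases hj : ⟪a j, x⟫ + b j = g x
  · exact Eventually.of_forall fun y _ => hj
  · have hlt : ⟪a j, x⟫ + b j < g x := lt_of_le_of_ne (aux_val_le hg j x) hj
    have hopen : IsOpen {y : En n | ⟪a j, y⟫ + b j < g y} :=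
      isOpen_lt ((continuous_const.inner continuous_id).add continuous_const) (aux_cont hg)
    filter_upwards [hopen.mem_nhds hlt] with y hy heq
    exact absurd heq hy.ne

private lemma aux_subset_hull
    (hg : ∀ x : En n, IsGreatest (Set.range fun j => ⟪a j, x⟫ + b j) (g x)) (x : En n) :
    FSubdiff g x ⊆ convexHull ℝ (a '' {j | ⟪a j, x⟫ + b j = g x}) := by
  intro v hv
  by_contra hmem
  have hfin : (a '' {j | ⟪a j, x⟫ + b j = g x}).Finite := (Set.toFinite _).image a
  obtain ⟨f, u, hfu, hvf⟩ := geometric_hahn_banach_closed_point (convex_convexHull ℝ _)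
      (hfin.isClosed_convexHull (𝕜 := ℝ)) hmem
  set w := (InnerProductSpace.toDual ℝ (En n)).symm f with hw
  have hwf : ∀ z, ⟪w, z⟫ = f z := fun z => InnerProductSpace.toDual_symm_apply
  have hx : Tendsto (fun t : ℝ => x + t • w) (𝓝[>] 0) (𝓝 x) := by
    have h1 : Tendsto (fun t : ℝ => x + t • w) (𝓝 0) (𝓝 x) := by
      have h2 : Tendsto (fun t : ℝ => t • w) (𝓝 0) (𝓝 ((0:ℝ) • w)) :=
        Filter.Tendsto.smul_const tendsto_id w
      simpa using tendsto_const_nhds.add h2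
    exact h1.mono_left nhdsWithin_le_nhds
  have hev : ∀ᶠ t : ℝ in 𝓝[>] 0,
      ∀ j, ⟪a j, x + t • w⟫ + b j = g (x + t • w) → ⟪a j, x⟫ + b j = g x :=
    hx.eventually (aux_active hg x)
  obtain ⟨t, hactprop, ht⟩ := (hev.and eventually_mem_nhdsWithin).exists
  have ht0 : (0:ℝ) < t := ht
  obtain ⟨j, hj⟩ := aux_val_ex hg (x + t • w)
  have hjact : ⟪a j, x⟫ + b j = g x := hactprop j hj
  have hsub := (aux_mem_iff hg).1 hv (x + t • w)
  have e1 : ⟪v, x + t • w - x⟫ = t * ⟪v, w⟫ := by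
    rw [add_sub_cancel_left, real_inner_smul_right]
  have e2 : ⟪a j, x + t • w⟫ + b j = (⟪a j, x⟫ + b j) + t * ⟪a j, w⟫ := by
    rw [inner_add_right, real_inner_smul_right]; ring
  have hvw : ⟪v, w⟫ ≤ ⟪a j, w⟫ := by
    rw [e1] at hsub
    rw [← hj, e2, hjact] at hsub
    have : t * ⟪v, w⟫ ≤ t * ⟪a j, w⟫ := by linarith
    exact le_of_mul_le_mul_left this ht0
  have h1 : f (a j) < u := hfu _ (subset_convexHull ℝ _ ⟨j, hjact, rfl⟩)
  have h2 : ⟪w, a j⟫ < ⟪w, v⟫ := by rw [hwf, hwf]; linarith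
  linarith [real_inner_comm w (a j), real_inner_comm w v]

end Aux

/-- for a finite pointwise maximum of affine functions, the union of the
support faces of `∂g(xb)` exposed by unit directions with positive directional
derivative equals the outer limit of subdifferentials along `x → xb`, `g x > g xb`. -/
theorem union_argmax_eq_outerLim_affine {n : ℕ} {ι : Type*} [Fintype ι]
    (a : ι → En n) (b : ι → ℝ) (g : En n → ℝ)
    (hg : ∀ x : En n, IsGreatest (Set.range fun j => ⟪a j, x⟫ + b j) (g x))
    (xb : En n) :
    (⋃ p ∈ {p : En n | ‖p‖ = 1 ∧ ∃ j : ι, ⟪a j, xb⟫ + b j = g xb ∧ 0 < ⟪a j, p⟫},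
      {v ∈ FSubdiff g xb | ∀ w ∈ FSubdiff g xb, ⟪w, p⟫ ≤ ⟪v, p⟫})
    = OuterLim g xb := by
  ext v
  simp only [Set.mem_iUnion, Set.mem_setOf_eq, exists_prop]
  constructor
  · rintro ⟨p, ⟨hp1, j0, hj0, hj0p⟩, hvF, hvmax⟩
    have hsub := (aux_mem_iff hg).1 hvF
    have hactive_sub : ∀ j, ⟪a j, xb⟫ + b j = g xb → a j ∈ FSubdiff g xb := by
      intro j hj
      rw [aux_mem_iff hg]
      intro z
      have h := aux_val_le hg j z
      rw [inner_sub_right, ← hj]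
      linarith
    have hvp_pos : 0 < ⟪v, p⟫ := lt_of_lt_of_le hj0p (hvmax _ (hactive_sub j0 hj0))
    have hev : ∀ᶠ t : ℝ in 𝓝[>] 0,
        ∀ j, ⟪a j, xb⟫ + b j + t * ⟪a j, p⟫ ≤ g xb + t * ⟪v, p⟫ := by
      rw [eventually_all]
      intro j
      by_cases hj : ⟪a j, xb⟫ + b j = g xb
      · have hle : ⟪a j, p⟫ ≤ ⟪v, p⟫ := hvmax _ (hactive_sub j hj)
        filter_upwards [eventually_mem_nhdsWithin] with t ht
        have ht0 : (0:ℝ) < t := ht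
        rw [hj]
        nlinarith
      · have hlt : ⟪a j, xb⟫ + b j < g xb := lt_of_le_of_ne (aux_val_le hg j xb) hj
        have hopen : IsOpen {t : ℝ | ⟪a j, xb⟫ + b j + t * ⟪a j, p⟫ < g xb + t * ⟪v, p⟫} := by
          apply isOpen_lt <;> continuity
        have h0 : (0:ℝ) ∈ {t : ℝ | ⟪a j, xb⟫ + b j + t * ⟪a j, p⟫ < g xb + t * ⟪v, p⟫} := by
          simpa using hlt
        exact ((hopen.eventually_mem h0).filter_mono nhdsWithin_le_nhds).mono
          fun t ht => le_of_lt ht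
    rw [eventually_nhdsWithin_iff, Metric.eventually_nhds_iff] at hev
    obtain ⟨δ, hδ, hball⟩ := hev
    set tk : ℕ → ℝ := fun k => δ / ((k : ℝ) + 2) with htk_def
    have htk_pos : ∀ k, 0 < tk k := fun k => by positivity
    have htk_prop : ∀ k, ∀ j, ⟪a j, xb⟫ + b j + tk k * ⟪a j, p⟫ ≤ g xb + tk k * ⟪v, p⟫ := by
      intro k
      apply hball
      · rw [Real.dist_eq, sub_zero, abs_of_pos (htk_pos k)]
        rw [div_lt_iff₀ (by positivity)]
        nlinarith [(Nat.cast_nonneg k : (0:ℝ) ≤ (k:ℕ))]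
      · exact htk_pos k
    have htk0 : Tendsto tk atTop (𝓝 0) := by
      have h1 := (tendsto_const_div_atTop_nhds_zero_nat δ).comp (tendsto_add_atTop_nat 2)
      apply h1.congr
      intro k
      simp only [htk_def, Function.comp_apply]
      push_cast
      ring
    refine ⟨fun k => xb + tk k • p, fun _ => v, ?_, ?_, ?_, tendsto_const_nhds⟩
    · have h2 : Tendsto (fun k => tk k • p) atTop (𝓝 ((0:ℝ) • p)) :=
        Filter.Tendsto.smul_const htk0 p
      simpa using tendsto_const_nhds.add h2
    · intro k
      have e1 : ⟪a j0, xb + tk k • p⟫ + b j0 = (⟪a j0, xb⟫ + b j0) + tk k * ⟪a j0, p⟫ := by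
        rw [inner_add_right, real_inner_smul_right]; ring
      have hge := aux_val_le hg j0 (xb + tk k • p)
      rw [e1, hj0] at hge
      nlinarith [htk_pos k]
    · intro k
      rw [aux_mem_iff hg]
      intro z
      obtain ⟨j, hj⟩ := aux_val_ex hg (xb + tk k • p)
      have h1 := htk_prop k j
      have h2 := hsub z
      have e1 : ⟪a j, xb + tk k • p⟫ + b j = ⟪a j, xb⟫ + b j + tk k * ⟪a j, p⟫ := by
        rw [inner_add_right, real_inner_smul_right]; ring
      have e2 : ⟪v, z - (xb + tk k • p)⟫ = ⟪v, z - xb⟫ - tk k * ⟪v, p⟫ := by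
        rw [show z - (xb + tk k • p) = (z - xb) - tk k • p by abel, inner_sub_right,
          real_inner_smul_right]
      rw [← hj, e1, e2]
      linarith
  · rintro ⟨xk, yk, hxk, hgk, hyk, hykv⟩
    have hsubk : ∀ k z, g (xk k) + ⟪yk k, z - xk k⟫ ≤ g z := fun k => (aux_mem_iff hg).1 (hyk k)
    have hcont := aux_cont hg
    have hvF : v ∈ FSubdiff g xb := by
      rw [aux_mem_iff hg]
      intro z
      have hlim : Tendsto (fun k => g (xk k) + ⟪yk k, z - xk k⟫) atTop
          (𝓝 (g xb + ⟪v, z - xb⟫)) :=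
        ((hcont.continuousAt).tendsto.comp hxk).add (hykv.inner (tendsto_const_nhds.sub hxk))
      exact le_of_tendsto hlim (Eventually.of_forall fun k => hsubk k z)
    obtain ⟨K, hK⟩ := Finite.exists_infinite_fiber
      (fun k => {j | ⟪a j, xk k⟫ + b j = g (xk k)} : ℕ → Set ι)
    have hKfreq : ∃ᶠ k in atTop, {j | ⟪a j, xk k⟫ + b j = g (xk k)} = K := by
      rw [frequently_atTop]
      intro N
      obtain ⟨k, hk1, hk2⟩ := (Set.infinite_coe_iff.1 hK).exists_gt N
      exact ⟨k, hk2.le, hk1⟩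
    have hev : ∀ᶠ k in atTop, ∀ j, ⟪a j, xk k⟫ + b j = g (xk k) → ⟪a j, xb⟫ + b j = g xb :=
      hxk.eventually (aux_active hg xb)
    obtain ⟨k0, hk0K, hk0act⟩ := (hKfreq.and_eventually hev).exists
    have hd0 : 0 < g (xk k0) - g xb := sub_pos.2 (hgk k0)
    have hKsub : ∀ j ∈ K, (⟪a j, xb⟫ + b j = g xb) ∧
        ⟪a j, xk k0 - xb⟫ = g (xk k0) - g xb := by
      intro j hjK
      have hjk0 : ⟪a j, xk k0⟫ + b j = g (xk k0) := by rw [← hk0K] at hjK; exact hjK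
      have hjxb := hk0act j hjk0
      refine ⟨hjxb, ?_⟩
      rw [inner_sub_right]
      linarith
    have hvu_eq : ⟪xk k0 - xb, v⟫ = g (xk k0) - g xb := by
      have hconv : ∀ k, {j | ⟪a j, xk k⟫ + b j = g (xk k)} = K →
          ⟪xk k0 - xb, yk k⟫ ∈ ({g (xk k0) - g xb} : Set ℝ) := by
        intro k hk
        have hmem := aux_subset_hull hg (xk k) (hyk k)
        rw [hk] at hmem
        have hsubs : a '' K ⊆ {w : En n | ⟪xk k0 - xb, w⟫ = g (xk k0) - g xb} := by
          rintro _ ⟨j, hjK, rfl⟩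
          have h := (hKsub j hjK).2
          rw [Set.mem_setOf_eq, real_inner_comm]
          exact h
        have hcvx : Convex ℝ {w : En n | ⟪xk k0 - xb, w⟫ = g (xk k0) - g xb} := by
          apply convex_hyperplane
            (f := fun w : En n => ⟪xk k0 - xb, w⟫)
          constructor
          · intro x y; exact inner_add_right _ _ _
          · intro c x; rw [real_inner_smul_right]; rfl
        exact convexHull_min hsubs hcvx hmem
      have htendsto : Tendsto (fun k => ⟪xk k0 - xb, yk k⟫) atTop (𝓝 ⟪xk k0 - xb, v⟫) :=
        tendsto_const_nhds.inner hykv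
      have hcl := mem_closure_of_frequently_of_tendsto (hKfreq.mono hconv) htendsto
      rwa [isClosed_singleton.closure_eq, Set.mem_singleton_iff] at hcl
    have hu0 : xk k0 - xb ≠ 0 := by
      intro h
      rw [sub_eq_zero] at h
      have h2 := hgk k0
      rw [h] at h2
      exact lt_irrefl _ h2
    have ht0 : (0:ℝ) < ‖xk k0 - xb‖ := norm_pos_iff.2 hu0
    obtain ⟨j1, hj1K⟩ : K.Nonempty := by
      obtain ⟨j, hj⟩ := aux_val_ex hg (xk k0)
      exact ⟨j, by rw [← hk0K]; exact hj⟩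
    refine ⟨‖xk k0 - xb‖⁻¹ • (xk k0 - xb), ⟨?_, j1, (hKsub j1 hj1K).1, ?_⟩, hvF, ?_⟩
    · rw [norm_smul, norm_inv, norm_norm]
      field_simp
    · rw [real_inner_smul_right, (hKsub j1 hj1K).2]
      positivity
    · intro w hw
      have h1 : ⟪w, xk k0 - xb⟫ ≤ g (xk k0) - g xb := by
        have h := (aux_mem_iff hg).1 hw (xk k0)
        linarith
      have h2 : ⟪v, xk k0 - xb⟫ = g (xk k0) - g xb := by
        rw [real_inner_comm]; exact hvu_eq
      rw [real_inner_smul_right, real_inner_smul_right]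
      have h3 : ⟪w, xk k0 - xb⟫ ≤ ⟪v, xk k0 - xb⟫ := by rw [h2]; exact h1
      exact mul_le_mul_of_nonneg_left h3 (by positivity)
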